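/- arXiv:2601.05195 — 2 statements merged into one kernel-verified Lean document; each statement's English description precedes it below -/
import Mathlib

section
/- For any finite graph G and any vertex v of G, bn(G) ≤ bn(G - v) + 2, where G - v is the graph obtained by deleting v and its incident edges. -/
variable {V : Type*} [Fintype V] [DecidableEq V]

/-- An F2-cycle relative to an edge set `E`: a finite set of edges, all belonging to `E`,
in which every vertex has even degree. -/
def IsF2CycleIn (E : Set (Sym2 V)) (C : Finset (Sym2 V)) : Prop :=
  (∀ e ∈ C, e ∈ E) ∧ ∀ v : V, Even ((C.filter (fun e => v ∈ e)).card)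

/-- `B` generates the cycle space of the graph with edge set `E`: every F2-cycle is a
symmetric difference of a subfamily of `B`. -/
def GeneratesIn (E : Set (Sym2 V)) (B : List (Finset (Sym2 V))) : Prop :=
  ∀ C : Finset (Sym2 V), IsF2CycleIn E C →
    ∃ l : List (Finset (Sym2 V)), l.Sublist B ∧ C = l.foldr symmDiff ∅

/-- The basis number of the graph with edge set `E`: the least `k` such that some
family of F2-cycles generating the cycle space uses each edge at most `k` times. -/
noncomputable def bnSet (E : Set (Sym2 V)) : ℕ :=
  sInf {k | ∃ B : List (Finset (Sym2 V)), (∀ X ∈ B, IsF2CycleIn E X) ∧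
    GeneratesIn E B ∧ ∀ e : Sym2 V, B.countP (fun X => decide (e ∈ X)) ≤ k}

/-- The basis number of a graph. -/
noncomputable def SimpleGraph.bn (G : SimpleGraph V) : ℕ := bnSet G.edgeSet

open scoped symmDiff

lemma mem_foldr_symmDiff (l : List (Finset (Sym2 V))) (e : Sym2 V) :
    e ∈ l.foldr symmDiff ∅ ↔ Odd (l.countP (fun X => decide (e ∈ X))) := by
  induction l with
  | nil => simp
  | cons X l ih =>
    simp only [List.foldr_cons, List.countP_cons, Finset.mem_symmDiff, ih]
    by_cases hX : e ∈ X <;> simp [hX, Nat.odd_iff, Nat.even_iff, Nat.add_mod] <;> omega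

lemma even_card_symmDiff {A B : Finset (Sym2 V)} (hA : Even A.card) (hB : Even B.card) :
    Even (A ∆ B).card := by
  have h1 : (A ∆ B) ∪ (A ∩ B) = A ∪ B := symmDiff_sup_inf A B
  have h2 : Disjoint (A ∆ B) (A ∩ B) := disjoint_symmDiff_inf A B
  have h3 := Finset.card_union_of_disjoint h2
  have h4 := Finset.card_union_add_card_inter A B
  rw [h1] at h3
  rw [Nat.even_iff] at *
  omega

lemma filter_symmDiff' (p : Sym2 V → Prop) [DecidablePred p] (A B : Finset (Sym2 V)) :
    (A ∆ B).filter p = (A.filter p) ∆ (B.filter p) := by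
  ext e
  simp [Finset.mem_symmDiff, Finset.mem_filter]
  tauto

lemma even_fdeg_symmDiff {A B : Finset (Sym2 V)} {w : V}
    (hA : Even ((A.filter (fun e => w ∈ e)).card))
    (hB : Even ((B.filter (fun e => w ∈ e)).card)) :
    Even (((A ∆ B).filter (fun e => w ∈ e)).card) := by
  rw [filter_symmDiff']
  exact even_card_symmDiff hA hB

lemma foldr_symmDiff_even (l : List (Finset (Sym2 V))) (w : V)
    (h : ∀ X ∈ l, Even ((X.filter (fun e => w ∈ e)).card)) :
    Even (((l.foldr symmDiff ∅).filter (fun e => w ∈ e)).card) := by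
  induction l with
  | nil => simp
  | cons X l ih =>
    simp only [List.foldr_cons]
    exact even_fdeg_symmDiff (h X (by simp)) (ih fun Y hY => h Y (by simp [hY]))

lemma mem_of_mem_foldr {l : List (Finset (Sym2 V))} {e : Sym2 V}
    (h : e ∈ l.foldr symmDiff ∅) : ∃ X ∈ l, e ∈ X := by
  rw [mem_foldr_symmDiff] at h
  have : 0 < l.countP (fun X => decide (e ∈ X)) := by
    rcases h with ⟨k, hk⟩; omega
  rw [List.countP_pos_iff] at this
  simpa using this

lemma foldr_symmDiff_append (l₁ l₂ : List (Finset (Sym2 V))) :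
    (l₁ ++ l₂).foldr symmDiff ∅ = (l₁.foldr symmDiff ∅) ∆ (l₂.foldr symmDiff ∅) := by
  induction l₁ with
  | nil => ext e; simp [Finset.mem_symmDiff]
  | cons X l ih => simp [ih, symmDiff_assoc]

lemma symmDiff_empty' {α : Type*} [DecidableEq α] (A : Finset α) : A ∆ (∅ : Finset α) = A := by
  ext e; simp [Finset.mem_symmDiff]

lemma foldr_symmDiff_map_ite (Y : Finset (Sym2 V)) (p : Finset (Sym2 V) → Prop)
    [DecidablePred p] (l : List (Finset (Sym2 V))) :
    (l.map (fun X => if p X then X ∆ Y else X)).foldr symmDiff ∅ =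
      (l.foldr symmDiff ∅) ∆ (if Odd (l.countP (fun X => decide (p X))) then Y else ∅) := by
  induction l with
  | nil => simp
  | cons X l ih =>
    simp only [List.map_cons, List.foldr_cons, List.countP_cons, ih]
    rcases Nat.even_or_odd (l.countP (fun X => decide (p X))) with he | he
    · have h1 : ¬ Odd (l.countP (fun X => decide (p X))) := by
        simpa [Nat.not_odd_iff_even] using he
      by_cases hp : p X
      · rw [if_pos hp, if_neg h1, if_pos (by simp [hp, Nat.odd_add_one, Nat.not_odd_iff_even,
          he])]
        ext e; simp [Finset.mem_symmDiff]; try tauto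
      · rw [if_neg hp, if_neg h1, if_neg (by simp [hp, h1])]
        ext e; simp [Finset.mem_symmDiff]; try tauto
    · have h1 : Odd (l.countP (fun X => decide (p X))) := he
      by_cases hp : p X
      · rw [if_pos hp, if_pos h1, if_neg (by simp [hp, Nat.odd_add_one, Nat.not_odd_iff_even,
          Nat.not_even_iff_odd, he])]
        ext e; simp [Finset.mem_symmDiff]; try tauto
      · rw [if_neg hp, if_pos h1, if_pos (by simp [hp, h1])]
        ext e; simp [Finset.mem_symmDiff]; try tauto

open SimpleGraph in
lemma edge_at_start {G : SimpleGraph V} {x y : V} (w : G.Walk x y) (hw : w.IsPath)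
    {e : Sym2 V} (he : e ∈ w.edges) (hx : x ∈ e) : e = s(x, w.getVert 1) := by
  cases w with
  | nil => simp at he
  | @cons _ c _ h p =>
    simp only [Walk.edges_cons, List.mem_cons] at he
    rcases he with rfl | he
    · simp [Walk.getVert_cons_succ, Walk.getVert_zero]
    · exfalso
      have hsp : s(x, Sym2.Mem.other hx) ∈ p.edges := by
        rw [Sym2.other_spec hx]; exact he
      have hxs : x ∈ p.support := p.fst_mem_support_of_mem_edges hsp
      rw [SimpleGraph.Walk.cons_isPath_iff] at hw
      exact hw.2 hxs

open SimpleGraph in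
lemma walk_countP_even {G : SimpleGraph V} {a b : V} (w : G.Walk a b) (t : V) :
    (w.edges.countP (fun e => decide (t ∈ e)) + (if t = a then 1 else 0) +
      (if t = b then 1 else 0)) % 2 = 0 := by
  induction w with
  | nil =>
    simp only [SimpleGraph.Walk.edges_nil, List.countP_nil]
    split <;> simp
  | @cons a c _ h p ih =>
    simp only [Walk.edges_cons, List.countP_cons]
    have hne : a ≠ c := h.ne
    have hm : (if decide (t ∈ s(a, c)) = true then 1 else 0) =
        (if t = a then 1 else 0) + (if t = c then 1 else 0) := by
      by_cases hta : t = a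
      · subst hta
        by_cases htc : t = c
        · exact absurd htc hne
        · simp [Sym2.mem_iff, htc]
      · by_cases htc : t = c
        · subst htc
          simp [Sym2.mem_iff, hta]
        · simp [Sym2.mem_iff, hta, htc]
    omega

open SimpleGraph in
lemma exists_even_subset (H : Finset (Sym2 V)) (hnd : ∀ e ∈ H, ¬ e.IsDiag)
    (hne : H.Nonempty) (hdeg : ∀ w, (H.filter (fun e => w ∈ e)).card ≠ 1) :
    ∃ Z : Finset (Sym2 V), Z ⊆ H ∧ Z.Nonempty ∧
      ∀ w, Even ((Z.filter (fun e => w ∈ e)).card) := by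
  classical
  set G' := SimpleGraph.fromEdgeSet (↑H : Set (Sym2 V)) with hG'
  have h0 : ∃ a b : V, G'.Adj a b := by
    obtain ⟨e₀, he₀⟩ := hne
    induction e₀ using Sym2.ind with
    | _ a b =>
      refine ⟨a, b, ?_⟩
      rw [hG', fromEdgeSet_adj]
      exact ⟨by exact_mod_cast he₀, fun hh => hnd _ he₀ (by simp [hh])⟩
  obtain ⟨a, b, hab⟩ := h0
  set P : ℕ → Prop := fun n => ∃ (x y : V) (w : G'.Walk x y), w.IsPath ∧ w.length = n with hPdef
  have hP1 : P 1 := ⟨a, b, Walk.cons hab Walk.nil, by simp [Walk.isPath_def, hab.ne], rfl⟩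
  have hPbound : ∀ n, P n → n < Fintype.card V := by
    rintro n ⟨x, y, w, hw, rfl⟩; exact hw.length_lt
  set m := Nat.findGreatest P (Fintype.card V) with hm_def
  have hm : P m := Nat.findGreatest_spec (le_of_lt (hPbound 1 hP1)) hP1
  have hm1 : 1 ≤ m := Nat.le_findGreatest (le_of_lt (hPbound 1 hP1)) hP1
  have hmax : ∀ (x' y' : V) (w' : G'.Walk x' y'), w'.IsPath → w'.length ≤ m := by
    intro x' y' w' hw'
    by_contra hlt
    push_neg at hlt
    exact Nat.findGreatest_is_greatest hlt (le_of_lt hw'.length_lt) ⟨x', y', w', hw', rfl⟩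
  obtain ⟨x, y, w, hw, hwl⟩ := hm
  have hnil : ¬ w.Nil := by rw [Walk.not_nil_iff_lt_length]; omega
  have hadj1 : G'.Adj x (w.getVert 1) := w.adj_snd hnil
  have hmem1 : s(x, w.getVert 1) ∈ H := by
    have := ((fromEdgeSet_adj _).mp hadj1).1
    exact_mod_cast this
  have hcard : 1 < (H.filter (fun e => x ∈ e)).card := by
    have h1 : s(x, w.getVert 1) ∈ H.filter (fun e => x ∈ e) := by
      simp [Finset.mem_filter, hmem1]
    have h2 := hdeg x
    have h3 : 0 < (H.filter (fun e => x ∈ e)).card := Finset.card_pos.mpr ⟨_, h1⟩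
    omega
  obtain ⟨f, hf, hfne⟩ := Finset.exists_mem_ne hcard s(x, w.getVert 1)
  rw [Finset.mem_filter] at hf
  have hxf : x ∈ f := hf.2
  set u := Sym2.Mem.other hxf with hu_def
  have hfu : f = s(x, u) := (Sym2.other_spec hxf).symm
  have hune : u ≠ x := by
    intro hh
    exact hnd f hf.1 (by rw [hfu, hh]; simp)
  have hadj2 : G'.Adj x u := by
    rw [hG', fromEdgeSet_adj]
    exact ⟨by rw [← hfu]; exact_mod_cast hf.1, Ne.symm hune⟩
  have hu2 : u ≠ w.getVert 1 := by
    intro hh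
    exact hfne (by rw [hfu, hh])
  have hus : u ∈ w.support := by
    by_contra hns
    have hP : (Walk.cons hadj2.symm w).IsPath := by
      rw [Walk.cons_isPath_iff]; exact ⟨hw, hns⟩
    have := hmax _ _ _ hP
    simp only [Walk.length_cons] at this
    omega
  set q := w.takeUntil u hus with hq_def
  have hq : q.IsPath := hw.takeUntil hus
  have hxq : s(x, u) ∉ q.edges := by
    intro hmem
    have hsub : s(x, u) ∈ w.edges := w.edges_takeUntil_subset hus hmem
    have := edge_at_start w hw hsub (by simp)
    rw [Sym2.congr_right] at this
    exact hu2 this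
  have hcyc : (Walk.cons hadj2 q.reverse).IsCycle := by
    rw [Walk.cons_isCycle_iff]
    refine ⟨hq.reverse, ?_⟩
    rw [Walk.edges_reverse, List.mem_reverse]
    exact hxq
  set c := Walk.cons hadj2 q.reverse with hc_def
  have hnodup : c.edges.Nodup := hcyc.isTrail.edges_nodup
  refine ⟨c.edges.toFinset, ?_, ?_, ?_⟩
  · intro e he
    rw [List.mem_toFinset] at he
    have := c.edges_subset_edgeSet he
    rw [hG', edgeSet_fromEdgeSet] at this
    exact_mod_cast this.1
  · refine ⟨s(x, u), ?_⟩
    rw [List.mem_toFinset, hc_def]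
    simp
  · intro t
    have hcount : ((c.edges.toFinset.filter (fun e => t ∈ e)).card) =
        c.edges.countP (fun e => decide (t ∈ e)) := by
      have heq : Finset.filter (fun e => t ∈ e) c.edges.toFinset =
          (c.edges.filter (fun e => decide (t ∈ e))).toFinset := by
        ext e; simp
      rw [heq, List.toFinset_card_of_nodup (hnodup.filter _), ← List.countP_eq_length_filter]
    rw [hcount]
    have := walk_countP_even c t
    rw [Nat.even_iff]
    by_cases ht : t = x <;> simp [ht] at this ⊢ <;> omega

lemma fold_append_ite (la lr : List (Finset (Sym2 V))) (Y : Finset (Sym2 V)) (b : Prop)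
    [Decidable b] :
    (la ++ (lr ++ (if b then [Y] else []))).foldr symmDiff ∅ =
      ((la ++ lr).foldr symmDiff ∅) ∆ (if b then Y else ∅) := by
  by_cases hb : b
  · simp only [if_pos hb, foldr_symmDiff_append, List.foldr_cons, List.foldr_nil]
    ext e; simp [Finset.mem_symmDiff]; try tauto
  · simp only [if_neg hb, foldr_symmDiff_append, List.foldr_cons, List.foldr_nil]
    ext e; simp [Finset.mem_symmDiff]; try tauto

lemma sd_rot (A B C D : Finset (Sym2 V)) : A ∆ ((B ∆ D) ∆ C) = (A ∆ (B ∆ C)) ∆ D := by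
  rw [symmDiff_assoc B D C, symmDiff_comm D C, ← symmDiff_assoc B C D,
    ← symmDiff_assoc A (B ∆ C) D]

lemma fold_cons_mid (la rb : List (Finset (Sym2 V))) (X₁ Y : Finset (Sym2 V)) (b : Prop)
    [Decidable b] :
    (la ++ (X₁ ∆ Y) :: (rb ++ (if b then [] else [Y]))).foldr symmDiff ∅ =
      ((la ++ X₁ :: rb).foldr symmDiff ∅) ∆ (if b then Y else ∅) := by
  by_cases hb : b
  · simp only [if_pos hb, List.append_nil, foldr_symmDiff_append, List.foldr_cons,
      List.foldr_nil]
    rw [sd_rot]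
  · simp only [if_neg hb, foldr_symmDiff_append, List.foldr_cons, List.foldr_nil,
      symmDiff_empty']
    rw [symmDiff_assoc X₁ Y _, symmDiff_comm Y (rb.foldr symmDiff ∅ ∆ Y),
      symmDiff_assoc _ Y Y]
    have hYY : Y ∆ Y = (∅ : Finset (Sym2 V)) := by ext e; simp [Finset.mem_symmDiff]
    rw [hYY, symmDiff_empty']

lemma match_wrap {F C Y : Finset (Sym2 V)} {b : Prop} [Decidable b] {e : Sym2 V}
    (hm : e ∈ F ↔ e ∈ C ∆ (if b then Y else ∅)) :
    e ∈ F ∆ (if b then Y else ∅) ↔ e ∈ C := by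
  by_cases hb : b <;> simp only [hb, if_true, if_false, symmDiff_empty'] at hm ⊢
  · rw [Finset.mem_symmDiff] at hm ⊢
    tauto
  · exact hm

/-- `X` is an F2-cycle using non-`v` edges from `H` and `v`-edges to `N`. -/
def GoodIn (v : V) (H : Finset (Sym2 V)) (N : Finset V) (X : Finset (Sym2 V)) : Prop :=
  (∀ e ∈ X, e ∈ H ∨ ∃ u ∈ N, e = s(v, u)) ∧ ∀ w, Even ((X.filter (fun e => w ∈ e)).card)

lemma sym2_vedge_eq {v u u' : V} (hu : u ≠ v) (h : s(v, u) = s(v, u')) : u = u' := by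
  rw [Sym2.eq_iff] at h
  rcases h with ⟨-, h⟩ | ⟨h1, h2⟩
  · exact h
  · exact absurd h2 hu

lemma good_mono {v : V} {H H' : Finset (Sym2 V)} {N N' : Finset V} (hH : H' ⊆ H)
    (hN : N' ⊆ N) {X : Finset (Sym2 V)} (h : GoodIn v H' N' X) : GoodIn v H N X := by
  refine ⟨fun e he => ?_, h.2⟩
  rcases h.1 e he with hh | ⟨u, hu, he'⟩
  · exact Or.inl (hH hh)
  · exact Or.inr ⟨u, hN hu, he'⟩

lemma good_vedge {v : V} {H : Finset (Sym2 V)} {N : Finset V} {X : Finset (Sym2 V)} {u : V}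
    (hvH : ∀ e ∈ H, v ∉ e) (hg : GoodIn v H N X) (hu : u ≠ v) (h : s(v, u) ∈ X) : u ∈ N := by
  rcases hg.1 _ h with hh | ⟨u', hu', heq⟩
  · exact absurd (by simp : v ∈ s(v, u)) (hvH _ hh)
  · rwa [sym2_vedge_eq (Ne.symm (fun hh => hu hh.symm)) heq]

lemma good_empty_no_vedge {v : V} {N : Finset V} (hvN : v ∉ N) {C : Finset (Sym2 V)}
    (hC : GoodIn v ∅ N C) {e : Sym2 V} (heC : e ∈ C) (hv : v ∈ e) : False := by
  rcases hC.1 e heC with h | ⟨u, huN, rfl⟩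
  · simp at h
  · have huv : u ≠ v := fun h => hvN (h ▸ huN)
    have hkey : C.filter (fun f => u ∈ f) = {s(v, u)} := by
      ext f
      simp only [Finset.mem_filter, Finset.mem_singleton]
      constructor
      · rintro ⟨hfC, huf⟩
        rcases hC.1 f hfC with h | ⟨u', hu'N, rfl⟩
        · simp at h
        · rcases Sym2.mem_iff.mp huf with h1 | h1
          · exact absurd h1 huv
          · rw [h1]
      · rintro rfl
        exact ⟨heC, by simp⟩
    have h2 := hC.2 u
    rw [hkey] at h2
    simp at h2

lemma core_base (v : V) (N : Finset V) (hvN : v ∉ N) :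
    ∃ D : List (Finset (Sym2 V)),
      (∀ X ∈ D, GoodIn v (∅ : Finset (Sym2 V)) N X) ∧
      (∀ e : Sym2 V, D.countP (fun X => decide (e ∈ X)) ≤ 2) ∧
      (∀ C, GoodIn v (∅ : Finset (Sym2 V)) N C →
        ∃ l : List (Finset (Sym2 V)), l.Sublist D ∧ ∀ e, v ∈ e → (e ∈ l.foldr symmDiff ∅ ↔ e ∈ C)) := by
  refine ⟨[], by simp, by simp, ?_⟩
  intro C hC
  refine ⟨[], List.nil_sublist _, fun e hv => ?_⟩
  simp only [List.foldr_nil, Finset.notMem_empty, false_iff]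
  exact fun heC => good_empty_no_vedge hvN hC heC hv

lemma core (v : V) : ∀ (n : ℕ) (H : Finset (Sym2 V)) (N : Finset V),
    H.card ≤ n → (∀ e ∈ H, ¬ e.IsDiag) → (∀ e ∈ H, v ∉ e) → v ∉ N →
    ∃ D : List (Finset (Sym2 V)),
      (∀ X ∈ D, GoodIn v H N X) ∧
      (∀ e : Sym2 V, D.countP (fun X => decide (e ∈ X)) ≤ 2) ∧
      (∀ C, GoodIn v H N C →
        ∃ l : List (Finset (Sym2 V)), l.Sublist D ∧ ∀ e, v ∈ e → (e ∈ l.foldr symmDiff ∅ ↔ e ∈ C)) := by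
  intro n
  induction n with
  | zero =>
    intro H N hcard _ _ hvN
    have hH : H = ∅ := Finset.card_eq_zero.mp (Nat.le_zero.mp hcard)
    subst hH
    exact core_base v N hvN
  | succ n ih =>
    intro H N hcard hnd hvH hvN
    by_cases hHe : H = ∅
    · subst hHe
      exact core_base v N hvN
    by_cases hleaf : ∃ ℓ, (H.filter (fun e => ℓ ∈ e)).card = 1
    · -- leaf case
      obtain ⟨ℓ, hℓ⟩ := hleaf
      obtain ⟨f, hfdef⟩ := Finset.card_eq_one.mp hℓ
      have hfH : f ∈ H := by
        have : f ∈ H.filter (fun e => ℓ ∈ e) := by rw [hfdef]; simp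
        exact (Finset.mem_filter.mp this).1
      have hlf : ℓ ∈ f := by
        have : f ∈ H.filter (fun e => ℓ ∈ e) := by rw [hfdef]; simp
        exact (Finset.mem_filter.mp this).2
      set p := Sym2.Mem.other hlf with hp_def
      have hfp : f = s(ℓ, p) := (Sym2.other_spec hlf).symm
      have hpl : p ≠ ℓ := by
        intro h
        exact hnd f hfH (by rw [hfp, h]; simp)
      have hlv : ℓ ≠ v := by
        intro h
        exact hvH f hfH (h ▸ hlf)
      have hpv : p ≠ v := by
        intro h
        exact hvH f hfH (by rw [hfp, h]; simp)
      have huniq : ∀ e ∈ H, ℓ ∈ e → e = f := by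
        intro e heH hle
        have : e ∈ H.filter (fun e => ℓ ∈ e) := Finset.mem_filter.mpr ⟨heH, hle⟩
        rw [hfdef] at this
        exact Finset.mem_singleton.mp this
      set H' := H.erase f with hH'_def
      have hH'sub : H' ⊆ H := Finset.erase_subset f H
      have hcard' : H'.card ≤ n := by
        rw [hH'_def, Finset.card_erase_of_mem hfH]
        omega
      have hfH' : f ∉ H' := Finset.notMem_erase f H
      by_cases hlN : ℓ ∈ N
      · set N' := insert p (N.erase ℓ) with hN'_def
        have hvN' : v ∉ N' := by
          rw [hN'_def]
          simp only [Finset.mem_insert, Finset.mem_erase]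
          rintro (h | ⟨-, h⟩)
          · exact hpv h.symm
          · exact hvN h
        obtain ⟨D', hD'good, hD'cnt, hD'gen⟩ :=
          ih H' N' hcard' (fun e he => hnd e (hH'sub he)) (fun e he => hvH e (hH'sub he)) hvN'
        have hlN' : ℓ ∉ N' := by
          rw [hN'_def]
          simp only [Finset.mem_insert, Finset.mem_erase]
          rintro (h | ⟨h, -⟩)
          · exact hpl h.symm
          · exact h rfl
        set Y : Finset (Sym2 V) := {s(v, ℓ), s(v, p), f} with hY_def
        have hmemY : ∀ e : Sym2 V, e ∈ Y ↔ e = s(v, ℓ) ∨ e = s(v, p) ∨ e = f := by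
          intro e; rw [hY_def]; simp
        have hd1 : s(v, ℓ) ≠ s(v, p) := by
          intro h
          exact hpl (sym2_vedge_eq hlv h).symm
        have hd2 : s(v, ℓ) ≠ f := by
          rw [hfp]
          intro h
          rw [Sym2.eq_iff] at h
          rcases h with ⟨h1, -⟩ | ⟨h1, -⟩
          · exact hlv h1.symm
          · exact hpv h1.symm
        have hd3 : s(v, p) ≠ f := by
          rw [hfp]
          intro h
          rw [Sym2.eq_iff] at h
          rcases h with ⟨h1, -⟩ | ⟨-, h2⟩
          · exact hlv h1.symm
          · exact hpl h2
        have hnoY : ∀ X ∈ D', s(v, ℓ) ∉ X ∧ f ∉ X := by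
          intro X hX
          constructor
          · intro h
            exact hlN' (good_vedge (fun e he => hvH e (hH'sub he)) (hD'good X hX) hlv h)
          · intro h
            rcases (hD'good X hX).1 f h with hh | ⟨u, huN, heq⟩
            · exact hfH' hh
            · exact hvH f hfH (by rw [heq]; simp)
        have hYeven : ∀ w, Even ((Y.filter (fun e => w ∈ e)).card) := by
          intro w
          by_cases hw1 : w = v
          · rw [hw1]
            have hYf : Y.filter (fun e => v ∈ e) = {s(v, ℓ), s(v, p)} := by
              ext e
              simp only [Finset.mem_filter, hmemY, Finset.mem_insert, Finset.mem_singleton]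
              constructor
              · rintro ⟨(rfl | rfl | hef), hv⟩
                · exact Or.inl rfl
                · exact Or.inr rfl
                · rw [hef] at hv
                  exact absurd hv (hvH f hfH)
              · rintro (rfl | rfl)
                · exact ⟨Or.inl rfl, by simp⟩
                · exact ⟨Or.inr (Or.inl rfl), by simp⟩
            rw [hYf, Finset.card_pair hd1]
            exact ⟨1, rfl⟩
          by_cases hw2 : w = ℓ
          · rw [hw2]
            have hYf : Y.filter (fun e => ℓ ∈ e) = {s(v, ℓ), f} := by
              ext e
              simp only [Finset.mem_filter, hmemY, Finset.mem_insert, Finset.mem_singleton]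
              constructor
              · rintro ⟨(rfl | rfl | rfl), hv⟩
                · exact Or.inl rfl
                · rcases Sym2.mem_iff.mp hv with h | h
                  · exact absurd h hlv
                  · exact absurd h (fun hh => hpl hh.symm)
                · exact Or.inr rfl
              · rintro (rfl | rfl)
                · exact ⟨Or.inl rfl, by simp⟩
                · exact ⟨Or.inr (Or.inr rfl), hlf⟩
            rw [hYf, Finset.card_pair hd2]
            exact ⟨1, rfl⟩
          by_cases hw3 : w = p
          · rw [hw3]
            have hYf : Y.filter (fun e => p ∈ e) = {s(v, p), f} := by
              ext e
              simp only [Finset.mem_filter, hmemY, Finset.mem_insert, Finset.mem_singleton]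
              constructor
              · rintro ⟨(rfl | rfl | rfl), hv⟩
                · rcases Sym2.mem_iff.mp hv with h | h
                  · exact absurd h hpv
                  · exact absurd h hpl
                · exact Or.inl rfl
                · exact Or.inr rfl
              · rintro (rfl | rfl)
                · exact ⟨Or.inr (Or.inl rfl), by simp⟩
                · exact ⟨Or.inr (Or.inr rfl), by rw [hfp]; simp⟩
            rw [hYf, Finset.card_pair hd3]
            exact ⟨1, rfl⟩
          · have hYf : Y.filter (fun e => w ∈ e) = ∅ := by
              ext e
              simp only [Finset.mem_filter, hmemY, Finset.notMem_empty, iff_false, not_and]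
              rintro (rfl | rfl | rfl) hv
              · rcases Sym2.mem_iff.mp hv with h | h
                · exact hw1 h
                · exact hw2 h
              · rcases Sym2.mem_iff.mp hv with h | h
                · exact hw1 h
                · exact hw3 h
              · rw [hfp] at hv
                rcases Sym2.mem_iff.mp hv with h | h
                · exact hw2 h
                · exact hw3 h
            rw [hYf]
            simp
        have hflink : ∀ C, GoodIn v H N C → (s(v, ℓ) ∈ C ↔ f ∈ C) := by
          intro C hC
          have hsub : C.filter (fun e => ℓ ∈ e) ⊆ {s(v, ℓ), f} := by
            intro e he
            rw [Finset.mem_filter] at he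
            rcases hC.1 e he.1 with hh | ⟨u, huN, rfl⟩
            · simp [huniq e hh he.2]
            · rcases Sym2.mem_iff.mp he.2 with h1 | h1
              · exact absurd h1 hlv
              · simp [← h1]
          have heven := hC.2 ℓ
          constructor
          · intro h1
            by_contra h2
            have hkey : C.filter (fun e => ℓ ∈ e) = {s(v, ℓ)} := by
              apply Finset.Subset.antisymm
              · intro e he
                have h3 := hsub he
                rw [Finset.mem_insert, Finset.mem_singleton] at h3
                rcases h3 with rfl | rfl
                · simp
                · exact absurd (Finset.mem_filter.mp he).1 h2
              · intro e he
                rw [Finset.mem_singleton] at he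
                subst he
                exact Finset.mem_filter.mpr ⟨h1, by simp⟩
            rw [hkey] at heven
            simp at heven
          · intro h1
            by_contra h2
            have hkey : C.filter (fun e => ℓ ∈ e) = {f} := by
              apply Finset.Subset.antisymm
              · intro e he
                have h3 := hsub he
                rw [Finset.mem_insert, Finset.mem_singleton] at h3
                rcases h3 with rfl | rfl
                · exact absurd (Finset.mem_filter.mp he).1 h2
                · simp
              · intro e he
                rw [Finset.mem_singleton] at he
                subst he
                exact Finset.mem_filter.mpr ⟨h1, hlf⟩
            rw [hkey] at heven
            simp at heven
        have htrans : ∀ C, GoodIn v H N C →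
            GoodIn v H' N' (C ∆ (if s(v, ℓ) ∈ C then Y else ∅)) := by
          intro C hC
          by_cases hx : s(v, ℓ) ∈ C
          · rw [if_pos hx]
            have hfC : f ∈ C := (hflink C hC).mp hx
            constructor
            · intro e he
              rw [Finset.mem_symmDiff] at he
              rcases he with ⟨heC, heY⟩ | ⟨heY, heC⟩
              · rcases hC.1 e heC with hh | ⟨u, huN, rfl⟩
                · refine Or.inl (Finset.mem_erase.mpr ⟨?_, hh⟩)
                  intro h
                  exact heY ((hmemY e).mpr (Or.inr (Or.inr h)))
                · refine Or.inr ⟨u, ?_, rfl⟩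
                  rw [hN'_def]
                  refine Finset.mem_insert.mpr (Or.inr (Finset.mem_erase.mpr ⟨?_, huN⟩))
                  intro h
                  exact heY ((hmemY _).mpr (Or.inl (by rw [h])))
              · rcases (hmemY e).mp heY with rfl | rfl | rfl
                · exact absurd hx heC
                · exact Or.inr ⟨p, by rw [hN'_def]; simp, rfl⟩
                · exact absurd hfC heC
            · intro w
              exact even_fdeg_symmDiff (hC.2 w) (hYeven w)
          · rw [if_neg hx, symmDiff_empty']
            have hfC : f ∉ C := fun h => hx ((hflink C hC).mpr h)
            constructor
            · intro e heC
              rcases hC.1 e heC with hh | ⟨u, huN, rfl⟩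
              · exact Or.inl (Finset.mem_erase.mpr ⟨fun h => hfC (h ▸ heC), hh⟩)
              · refine Or.inr ⟨u, ?_, rfl⟩
                rw [hN'_def]
                refine Finset.mem_insert.mpr (Or.inr (Finset.mem_erase.mpr ⟨?_, huN⟩))
                intro h
                subst h
                exact hx heC
            · exact hC.2
        -- the v-edge set of the transformed C determines membership of Y-parity
        by_cases hpN : p ∈ N
        · have hN'subN : N' ⊆ N := by
            rw [hN'_def]
            intro u hu
            rcases Finset.mem_insert.mp hu with rfl | hu
            · exact hpN
            · exact (Finset.mem_erase.mp hu).2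
          have hYgood : GoodIn v H N Y := by
            constructor
            · intro e he
              rcases (hmemY e).mp he with rfl | rfl | rfl
              · exact Or.inr ⟨ℓ, hlN, rfl⟩
              · exact Or.inr ⟨p, hpN, rfl⟩
              · exact Or.inl hfH
            · exact hYeven
          by_cases hex : ∃ X ∈ D', s(v, p) ∈ X
          · obtain ⟨X₁, hX₁D, hX₁p⟩ := hex
            obtain ⟨A, B, rfl⟩ := List.append_of_mem hX₁D
            have hgood_mem : ∀ W ∈ A ++ X₁ :: B, GoodIn v H N W := fun W hW =>
              good_mono hH'sub hN'subN (hD'good W hW)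
            refine ⟨A ++ (X₁ ∆ Y) :: (B ++ [Y]), ?_, ?_, ?_⟩
            · intro X hX
              rcases List.mem_append.mp hX with hX | hX
              · exact hgood_mem X (List.mem_append_left _ hX)
              · rcases List.mem_cons.mp hX with rfl | hX
                · have h1 := hgood_mem X₁ (by simp)
                  constructor
                  · intro e he
                    rw [Finset.mem_symmDiff] at he
                    rcases he with ⟨heC, -⟩ | ⟨heY, -⟩
                    · exact h1.1 e heC
                    · exact hYgood.1 e heY
                  · intro w
                    exact even_fdeg_symmDiff (h1.2 w) (hYeven w)
                · rcases List.mem_append.mp hX with hX | hX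
                  · exact hgood_mem X (by simp [hX])
                  · rw [List.mem_singleton] at hX
                    subst hX
                    exact hYgood
            · intro e
              have hcntD' := hD'cnt e
              rw [List.countP_append, List.countP_cons] at hcntD'
              rw [List.countP_append, List.countP_cons, List.countP_append, List.countP_cons,
                List.countP_nil]
              simp only [decide_eq_true_eq] at hcntD' ⊢
              have hAB0 : (e = s(v, ℓ) ∨ e = f) →
                  A.countP (fun X => decide (e ∈ X)) = 0 ∧
                  B.countP (fun X => decide (e ∈ X)) = 0 := by
                intro hor
                constructor <;>
                  · rw [List.countP_eq_zero]
                    intro X hX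
                    simp only [decide_eq_true_eq]
                    have := hnoY X (by simp [hX])
                    rcases hor with rfl | rfl
                    · exact this.1
                    · exact this.2
              by_cases he1 : e = s(v, ℓ)
              · obtain ⟨hA0, hB0⟩ := hAB0 (Or.inl he1)
                rw [hA0, hB0]
                have heY : e ∈ Y := (hmemY e).mpr (Or.inl he1)
                rw [if_pos heY]
                by_cases h2 : e ∈ X₁ ∆ Y <;> simp [h2]
              · by_cases he3 : e = f
                · obtain ⟨hA0, hB0⟩ := hAB0 (Or.inr he3)
                  rw [hA0, hB0]
                  have heY : e ∈ Y := (hmemY e).mpr (Or.inr (Or.inr he3))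
                  rw [if_pos heY]
                  by_cases h2 : e ∈ X₁ ∆ Y <;> simp [h2]
                · by_cases he2 : e = s(v, p)
                  · have heY : e ∈ Y := (hmemY e).mpr (Or.inr (Or.inl he2))
                    have heX₁ : e ∈ X₁ := he2 ▸ hX₁p
                    have hnot : e ∉ X₁ ∆ Y := by
                      rw [Finset.mem_symmDiff]
                      rintro (⟨-, h⟩ | ⟨-, h⟩) <;> [exact h heY; exact h heX₁]
                    rw [if_pos heY, if_neg hnot, if_pos heX₁] at *
                    omega
                  · have heY : e ∉ Y := by
                      rw [hmemY]
                      rintro (h | h | h) <;> [exact he1 h; exact he2 h; exact he3 h]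
                    have hiff : e ∈ X₁ ∆ Y ↔ e ∈ X₁ := by
                      rw [Finset.mem_symmDiff]
                      constructor
                      · rintro (⟨h, -⟩ | ⟨h, -⟩) <;> [exact h; exact absurd h heY]
                      · intro h
                        exact Or.inl ⟨h, heY⟩
                    rw [if_neg heY]
                    by_cases h2 : e ∈ X₁
                    · rw [if_pos (hiff.mpr h2)]
                      rw [if_pos h2] at hcntD'
                      omega
                    · rw [if_neg (fun hh => h2 (hiff.mp hh))]
                      rw [if_neg h2] at hcntD'
                      omega
            · intro C hC
              obtain ⟨l', hl', hmatch⟩ := hD'gen _ (htrans C hC)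
              rw [List.sublist_append_iff] at hl'
              obtain ⟨la, lr, rfl, hla, hlr⟩ := hl'
              rw [List.sublist_cons_iff] at hlr
              rcases hlr with hlr | ⟨rb, rfl, hrb⟩
              · refine ⟨la ++ (lr ++ (if s(v, ℓ) ∈ C then [Y] else [])), ?_, ?_⟩
                · refine List.Sublist.append hla ?_
                  refine List.Sublist.cons _ ?_
                  refine List.Sublist.append hlr ?_
                  split <;> simp
                · intro e hv
                  rw [fold_append_ite]
                  exact match_wrap (hmatch e hv)
              · refine ⟨la ++ (X₁ ∆ Y) :: (rb ++ (if s(v, ℓ) ∈ C then [] else [Y])), ?_, ?_⟩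
                · refine List.Sublist.append hla ?_
                  refine List.Sublist.cons₂ _ ?_
                  refine List.Sublist.append hrb ?_
                  split <;> simp
                · intro e hv
                  rw [fold_cons_mid]
                  exact match_wrap (hmatch e hv)
          · push_neg at hex
            refine ⟨D' ++ [Y], ?_, ?_, ?_⟩
            · intro X hX
              rcases List.mem_append.mp hX with hX | hX
              · exact good_mono hH'sub hN'subN (hD'good X hX)
              · rw [List.mem_singleton] at hX
                subst hX
                exact hYgood
            · intro e
              rw [List.countP_append, List.countP_cons, List.countP_nil]
              simp only [decide_eq_true_eq]
              by_cases heY : e ∈ Y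
              · rw [if_pos heY]
                have hD0 : D'.countP (fun X => decide (e ∈ X)) = 0 := by
                  rw [List.countP_eq_zero]
                  intro X hX
                  simp only [decide_eq_true_eq]
                  rcases (hmemY e).mp heY with rfl | rfl | rfl
                  · exact (hnoY X hX).1
                  · exact hex X hX
                  · exact (hnoY X hX).2
                rw [hD0]
                omega
              · rw [if_neg heY]
                have := hD'cnt e
                omega
            · intro C hC
              obtain ⟨l', hl', hmatch⟩ := hD'gen _ (htrans C hC)
              refine ⟨l' ++ (if s(v, ℓ) ∈ C then [Y] else []), ?_, ?_⟩
              · refine List.Sublist.append hl' ?_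
                split <;> simp
              · intro e hv
                have hfold : (l' ++ (if s(v, ℓ) ∈ C then [Y] else [])).foldr symmDiff ∅ =
                    (l'.foldr symmDiff ∅) ∆ (if s(v, ℓ) ∈ C then Y else ∅) := by
                  have := fold_append_ite ([] : List (Finset (Sym2 V))) l' Y (s(v, ℓ) ∈ C)
                  simpa using this
                rw [hfold]
                exact match_wrap (hmatch e hv)
        · -- p ∉ N : reroute all uses of s(v,p) through ℓ
          refine ⟨D'.map (fun X => if s(v, p) ∈ X then X ∆ Y else X), ?_, ?_, ?_⟩
          · intro X hX
            obtain ⟨X₀, hX₀, rfl⟩ := List.mem_map.mp hX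
            by_cases hp0 : s(v, p) ∈ X₀
            · rw [if_pos hp0]
              constructor
              · intro e he
                rw [Finset.mem_symmDiff] at he
                rcases he with ⟨heX, heY⟩ | ⟨heY, heX⟩
                · rcases (hD'good X₀ hX₀).1 e heX with hh | ⟨u, huN', rfl⟩
                  · exact Or.inl (hH'sub hh)
                  · have hup : u ≠ p := by
                      intro h
                      exact heY ((hmemY _).mpr (Or.inr (Or.inl (by rw [h]))))
                    rw [hN'_def] at huN'
                    rcases Finset.mem_insert.mp huN' with h | h
                    · exact absurd h hup
                    · exact Or.inr ⟨u, (Finset.mem_erase.mp h).2, rfl⟩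
                · rcases (hmemY e).mp heY with rfl | rfl | rfl
                  · exact Or.inr ⟨ℓ, hlN, rfl⟩
                  · exact absurd hp0 heX
                  · exact Or.inl hfH
              · intro w
                exact even_fdeg_symmDiff ((hD'good X₀ hX₀).2 w) (hYeven w)
            · rw [if_neg hp0]
              constructor
              · intro e he
                rcases (hD'good X₀ hX₀).1 e he with hh | ⟨u, huN', rfl⟩
                · exact Or.inl (hH'sub hh)
                · have hup : u ≠ p := fun h => hp0 (h ▸ he)
                  rw [hN'_def] at huN'
                  rcases Finset.mem_insert.mp huN' with h | h
                  · exact absurd h hup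
                  · exact Or.inr ⟨u, (Finset.mem_erase.mp h).2, rfl⟩
              · exact (hD'good X₀ hX₀).2
          · intro e
            rw [List.countP_map]
            have hYcase : ∀ (heY : e ∈ Y) (_ : ∀ X ∈ D', e ∉ X),
                D'.countP ((fun X => decide (e ∈ X)) ∘
                  fun X => if s(v, p) ∈ X then X ∆ Y else X) ≤ 2 := by
              intro heY hnoX
              have hcc : D'.countP ((fun X => decide (e ∈ X)) ∘
                  fun X => if s(v, p) ∈ X then X ∆ Y else X) =
                  D'.countP (fun X => decide (s(v, p) ∈ X)) := by
                apply List.countP_congr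
                intro X hX
                simp only [Function.comp_apply, decide_eq_true_eq]
                by_cases hp0 : s(v, p) ∈ X
                · rw [if_pos hp0]
                  have hm : e ∈ X ∆ Y := Finset.mem_symmDiff.mpr (Or.inr ⟨heY, hnoX X hX⟩)
                  simp [hm, hp0]
                · rw [if_neg hp0]
                  simp [hnoX X hX, hp0]
              rw [hcc]
              exact hD'cnt s(v, p)
            by_cases he1 : e = s(v, ℓ)
            · exact hYcase ((hmemY e).mpr (Or.inl he1))
                (fun X hX => by rw [he1]; exact (hnoY X hX).1)
            by_cases he3 : e = f
            · exact hYcase ((hmemY e).mpr (Or.inr (Or.inr he3)))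
                (fun X hX => by rw [he3]; exact (hnoY X hX).2)
            by_cases he2 : e = s(v, p)
            · subst he2
              have h0 : D'.countP ((fun X => decide (s(v, p) ∈ X)) ∘
                  fun X => if s(v, p) ∈ X then X ∆ Y else X) = 0 := by
                rw [List.countP_eq_zero]
                intro X hX
                simp only [Function.comp_apply, decide_eq_true_eq]
                by_cases hp0 : s(v, p) ∈ X
                · rw [if_pos hp0, Finset.mem_symmDiff]
                  have hpY : s(v, p) ∈ Y := (hmemY _).mpr (Or.inr (Or.inl rfl))
                  rintro (⟨-, h⟩ | ⟨-, h⟩) <;> [exact h hpY; exact h hp0]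
                · rw [if_neg hp0]
                  exact hp0
              omega
            · have heY : e ∉ Y := by
                rw [hmemY]
                rintro (h | h | h) <;> [exact he1 h; exact he2 h; exact he3 h]
              have hcc : D'.countP ((fun X => decide (e ∈ X)) ∘
                  fun X => if s(v, p) ∈ X then X ∆ Y else X) =
                  D'.countP (fun X => decide (e ∈ X)) := by
                apply List.countP_congr
                intro X hX
                simp only [Function.comp_apply, decide_eq_true_eq]
                by_cases hp0 : s(v, p) ∈ X
                · rw [if_pos hp0]
                  have hm : e ∈ X ∆ Y ↔ e ∈ X := by
                    rw [Finset.mem_symmDiff]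
                    constructor
                    · rintro (⟨h, -⟩ | ⟨h, -⟩) <;> [exact h; exact absurd h heY]
                    · intro h
                      exact Or.inl ⟨h, heY⟩
                  simp [hm]
                · rw [if_neg hp0]
              rw [hcc]
              exact hD'cnt e
          · intro C hC
            obtain ⟨l', hl', hmatch⟩ := hD'gen _ (htrans C hC)
            refine ⟨l'.map (fun X => if s(v, p) ∈ X then X ∆ Y else X), hl'.map _, ?_⟩
            intro e hv
            have hpC : s(v, p) ∉ C := fun h => hpN (good_vedge hvH hC hpv h)
            have hpC' : (s(v, p) ∈ C ∆ (if s(v, ℓ) ∈ C then Y else ∅)) ↔ s(v, ℓ) ∈ C := by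
              by_cases hx : s(v, ℓ) ∈ C <;>
                simp only [hx, if_true, if_false, symmDiff_empty']
              · have hpY : s(v, p) ∈ Y := (hmemY _).mpr (Or.inr (Or.inl rfl))
                simp [Finset.mem_symmDiff, hpY, hpC, hx]
              · simp [hpC, hx]
            have hparity : Odd (l'.countP (fun X => decide (s(v, p) ∈ X))) ↔ s(v, ℓ) ∈ C := by
              rw [← mem_foldr_symmDiff, hmatch s(v, p) (by simp)]
              exact hpC'
            rw [foldr_symmDiff_map_ite Y (fun X => s(v, p) ∈ X) l']
            have hite : (if Odd (l'.countP (fun X => decide (s(v, p) ∈ X))) then Y else ∅)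
                = (if s(v, ℓ) ∈ C then Y else ∅) := by
              by_cases hx : s(v, ℓ) ∈ C
              · rw [if_pos hx, if_pos (hparity.mpr hx)]
              · rw [if_neg hx, if_neg (fun h => hx (hparity.mp h))]
            rw [hite]
            exact match_wrap (hmatch e hv)

      · -- ℓ ∉ N : just delete the leaf edge
        obtain ⟨D', hD'good, hD'cnt, hD'gen⟩ :=
          ih H' N hcard' (fun e he => hnd e (hH'sub he)) (fun e he => hvH e (hH'sub he)) hvN
        refine ⟨D', fun X hX => good_mono hH'sub (le_refl N) (hD'good X hX), hD'cnt, ?_⟩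
        intro C hC
        have hfC : f ∉ C := by
          intro hfC
          have hsub : C.filter (fun e => ℓ ∈ e) = {f} := by
            ext e
            simp only [Finset.mem_filter, Finset.mem_singleton]
            constructor
            · rintro ⟨heC, hle⟩
              rcases hC.1 e heC with hh | ⟨u, huN, rfl⟩
              · exact huniq e hh hle
              · rcases Sym2.mem_iff.mp hle with h1 | h1
                · exact absurd h1 hlv
                · exact absurd (h1 ▸ huN) (h1 ▸ hlN)
            · rintro rfl
              exact ⟨hfC, hlf⟩
          have h2 := hC.2 ℓ
          rw [hsub] at h2
          simp at h2
        have hCgood' : GoodIn v H' N C := by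
          refine ⟨fun e heC => ?_, hC.2⟩
          rcases hC.1 e heC with hh | hu
          · refine Or.inl (Finset.mem_erase.mpr ⟨fun h => hfC (h ▸ heC), hh⟩)
          · exact Or.inr hu
        exact hD'gen C hCgood'
    · -- no leaf: find an even nonempty subset and delete one of its edges
      have hdeg : ∀ w, (H.filter (fun e => w ∈ e)).card ≠ 1 := by
        push_neg at hleaf
        exact hleaf
      obtain ⟨Z, hZH, hZne, hZeven⟩ :=
        exists_even_subset H hnd (Finset.nonempty_iff_ne_empty.mpr hHe) hdeg
      obtain ⟨e₀, he₀Z⟩ := hZne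
      have he₀H : e₀ ∈ H := hZH he₀Z
      set H' := H.erase e₀ with hH'_def
      have hH'sub : H' ⊆ H := Finset.erase_subset e₀ H
      have hcard' : H'.card ≤ n := by
        rw [hH'_def, Finset.card_erase_of_mem he₀H]
        omega
      obtain ⟨D', hD'good, hD'cnt, hD'gen⟩ :=
        ih H' N hcard' (fun e he => hnd e (hH'sub he)) (fun e he => hvH e (hH'sub he)) hvN
      refine ⟨D', fun X hX => good_mono hH'sub (le_refl N) (hD'good X hX), hD'cnt, ?_⟩
      intro C hC
      set C' := C ∆ (if e₀ ∈ C then Z else ∅) with hC'_def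
      have hC'good : GoodIn v H' N C' := by
        constructor
        · intro e heC'
          rw [hC'_def] at heC'
          by_cases he₀C : e₀ ∈ C
          · rw [if_pos he₀C, Finset.mem_symmDiff] at heC'
            rcases heC' with ⟨heC, heZ⟩ | ⟨heZ, heC⟩
            · rcases hC.1 e heC with hh | hu
              · exact Or.inl (Finset.mem_erase.mpr ⟨fun h => heZ (h ▸ he₀Z), hh⟩)
              · exact Or.inr hu
            · refine Or.inl (Finset.mem_erase.mpr ⟨fun h => heC (h ▸ he₀C), hZH heZ⟩)
          · rw [if_neg he₀C, symmDiff_empty'] at heC'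
            rcases hC.1 e heC' with hh | hu
            · exact Or.inl (Finset.mem_erase.mpr ⟨fun h => he₀C (h ▸ heC'), hh⟩)
            · exact Or.inr hu
        · intro w
          rw [hC'_def]
          by_cases he₀C : e₀ ∈ C
          · rw [if_pos he₀C]
            exact even_fdeg_symmDiff (hC.2 w) (hZeven w)
          · rw [if_neg he₀C, symmDiff_empty']
            exact hC.2 w
      obtain ⟨l, hl, hmatch⟩ := hD'gen C' hC'good
      refine ⟨l, hl, fun e hv => ?_⟩
      have hvZ : e ∉ Z := fun heZ => hvH e (hZH heZ) hv
      have := hmatch e hv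
      rw [hC'_def] at this
      by_cases he₀C : e₀ ∈ C
      · rw [if_pos he₀C, Finset.mem_symmDiff] at this
        tauto
      · rw [if_neg he₀C, symmDiff_empty'] at this
        exact this

lemma bnSet_set_nonempty (E : Set (Sym2 V)) :
    {k | ∃ B : List (Finset (Sym2 V)), (∀ X ∈ B, IsF2CycleIn E X) ∧
      GeneratesIn E B ∧ ∀ e : Sym2 V, B.countP (fun X => decide (e ∈ X)) ≤ k}.Nonempty := by
  classical
  set B := ((Finset.univ : Finset (Finset (Sym2 V))).filter (fun C => IsF2CycleIn E C)).toList
    with hB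
  refine ⟨B.length, B, ?_, ?_, ?_⟩
  · intro X hX
    rw [hB, Finset.mem_toList, Finset.mem_filter] at hX
    exact hX.2
  · intro C hC
    refine ⟨[C], ?_, ?_⟩
    · rw [List.singleton_sublist, hB, Finset.mem_toList, Finset.mem_filter]
      exact ⟨Finset.mem_univ _, hC⟩
    · rw [List.foldr_cons, List.foldr_nil, symmDiff_empty']
  · intro e
    exact List.countP_le_length

/-- deleting a vertex decreases the basis number by at most 2:
`bn(G) ≤ bn(G - v) + 2`, where `G - v` is the induced subgraph on the complement of `v`. -/
theorem bn_le_bn_deleteVertex_add_two (G : SimpleGraph V) (v : V) :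
    G.bn ≤ (G.induce ({v}ᶜ : Set V)).bn + 2 := by
  classical
  set sc : Set V := {v}ᶜ with hsc
  haveI : Fintype ↥sc := Fintype.ofFinite _
  set GI := G.induce sc with hGI
  -- witness for the induced graph
  have hne : {k | ∃ B : List (Finset (Sym2 ↥sc)), (∀ X ∈ B, IsF2CycleIn GI.edgeSet X) ∧
      GeneratesIn GI.edgeSet B ∧
      ∀ e : Sym2 ↥sc, B.countP (fun X => decide (e ∈ X)) ≤ k}.Nonempty := by
    obtain ⟨k, B, h1, h2, h3⟩ := bnSet_set_nonempty (GI.edgeSet)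
    exact ⟨k, B, h1, h2, h3⟩
  have hmem := Nat.sInf_mem hne
  obtain ⟨B'', hB''cyc, hB''gen, hB''cnt⟩ := hmem
  haveI : Fintype ↥G.edgeSet := Fintype.ofFinite _
  haveI : Fintype ↥(G.neighborSet v) := Fintype.ofFinite _
  set H : Finset (Sym2 V) := G.edgeFinset.filter (fun e => v ∉ e) with hHdef
  set N : Finset V := G.neighborFinset v with hNdef
  have hHE : ∀ e ∈ H, e ∈ G.edgeSet := by
    intro e he
    rw [hHdef, Finset.mem_filter, SimpleGraph.mem_edgeFinset] at he
    exact he.1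
  have hvH : ∀ e ∈ H, v ∉ e := by
    intro e he
    rw [hHdef, Finset.mem_filter] at he
    exact he.2
  have hnd : ∀ e ∈ H, ¬ e.IsDiag := fun e he =>
    G.not_isDiag_of_mem_edgeSet (hHE e he)
  have hvN : v ∉ N := by
    rw [hNdef, SimpleGraph.mem_neighborFinset]
    exact G.irrefl
  obtain ⟨D, hDgood, hDcnt, hDgen⟩ := core v H.card H N le_rfl hnd hvH hvN
  set ι : Sym2 ↥sc → Sym2 V := Sym2.map (fun x => (x : V)) with hι
  have hinj : Function.Injective ι := Sym2.map.injective Subtype.val_injective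
  have hvι : ∀ e' : Sym2 ↥sc, v ∉ ι e' := by
    intro e'
    induction e' using Sym2.ind with
    | _ a b =>
      rw [hι]
      simp only [Sym2.map_pair_eq, Sym2.mem_iff]
      rintro (h | h)
      · have h2 : (a : V) ∈ ({v}ᶜ : Set V) := a.2
        exact Set.mem_compl_singleton_iff.mp h2 h.symm
      · have h2 : (b : V) ∈ ({v}ᶜ : Set V) := b.2
        exact Set.mem_compl_singleton_iff.mp h2 h.symm
  have hmemι : ∀ (w : V) (hw : w ∈ sc) (e' : Sym2 ↥sc),
      (w ∈ ι e') ↔ (⟨w, hw⟩ : ↥sc) ∈ e' := by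
    intro w hw e'
    induction e' using Sym2.ind with
    | _ a b =>
      rw [hι]
      simp only [Sym2.map_pair_eq, Sym2.mem_iff]
      constructor
      · rintro (h | h)
        · exact Or.inl (Subtype.ext h)
        · exact Or.inr (Subtype.ext h)
      · rintro (h | h)
        · exact Or.inl (congrArg Subtype.val h)
        · exact Or.inr (congrArg Subtype.val h)
  have hedge : ∀ e' : Sym2 ↥sc, e' ∈ GI.edgeSet ↔ ι e' ∈ G.edgeSet := by
    intro e'
    induction e' using Sym2.ind with
    | _ a b =>
      rw [hGI, hι]
      simp only [Sym2.map_pair_eq, SimpleGraph.mem_edgeSet, SimpleGraph.comap_adj,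
        Function.Embedding.coe_subtype]
  have hpre : ∀ e : Sym2 V, v ∉ e → ∃ e' : Sym2 ↥sc, ι e' = e := by
    intro e
    induction e using Sym2.ind with
    | _ a b =>
      intro hv
      rw [Sym2.mem_iff] at hv
      push_neg at hv
      refine ⟨s(⟨a, ?_⟩, ⟨b, ?_⟩), by rw [hι]; simp [Sym2.map_pair_eq]⟩
      · rw [hsc]; simp [Ne.symm hv.1]
      · rw [hsc]; simp [Ne.symm hv.2]
  have hfilter_img : ∀ (X : Finset (Sym2 ↥sc)) (w : V) (hw : w ∈ sc),
      (X.image ι).filter (fun e => w ∈ e) =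
        (X.filter (fun e' => (⟨w, hw⟩ : ↥sc) ∈ e')).image ι := by
    intro X w hw
    ext e
    simp only [Finset.mem_filter, Finset.mem_image]
    constructor
    · rintro ⟨⟨e', he', rfl⟩, hwmem⟩
      exact ⟨e', ⟨he', (hmemι w hw e').mp hwmem⟩, rfl⟩
    · rintro ⟨e', ⟨he', hmem⟩, rfl⟩
      exact ⟨⟨e', he', rfl⟩, (hmemι w hw e').mpr hmem⟩
  have himg_cyc : ∀ X ∈ B'', IsF2CycleIn G.edgeSet (X.image ι) := by
    intro X hX
    obtain ⟨h1, h2⟩ := hB''cyc X hX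
    constructor
    · intro e he
      obtain ⟨e', he', rfl⟩ := Finset.mem_image.mp he
      exact (hedge e').mp (h1 e' he')
    · intro w
      by_cases hw : w ∈ sc
      · rw [hfilter_img X w hw, Finset.card_image_of_injective _ hinj]
        exact h2 _
      · have hwv : w = v := by
          rw [hsc] at hw
          simpa using hw
        have : (X.image ι).filter (fun e => w ∈ e) = ∅ := by
          rw [Finset.filter_eq_empty_iff]
          intro e he
          obtain ⟨e', he', rfl⟩ := Finset.mem_image.mp he
          rw [hwv]
          exact hvι e'
        rw [this]
        simp
  have hD_cyc : ∀ X ∈ D, IsF2CycleIn G.edgeSet X := by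
    intro X hX
    obtain ⟨h1, h2⟩ := hDgood X hX
    refine ⟨?_, h2⟩
    intro e he
    rcases h1 e he with hh | ⟨u, hu, rfl⟩
    · exact hHE e hh
    · rw [SimpleGraph.mem_edgeSet]
      rw [hNdef, SimpleGraph.mem_neighborFinset] at hu
      exact hu
  have himg_fold : ∀ l : List (Finset (Sym2 ↥sc)),
      (l.map (fun X => X.image ι)).foldr symmDiff ∅ = (l.foldr symmDiff ∅).image ι := by
    intro l
    induction l with
    | nil => simp
    | cons X l ihl =>
      simp only [List.map_cons, List.foldr_cons, ihl]
      rw [Finset.image_symmDiff _ _ hinj]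
  show bnSet G.edgeSet ≤ _
  apply Nat.sInf_le
  refine ⟨(B''.map (fun X => X.image ι)) ++ D, ?_, ?_, ?_⟩
  · intro X hX
    rcases List.mem_append.mp hX with hX | hX
    · obtain ⟨X'', hX'', rfl⟩ := List.mem_map.mp hX
      exact himg_cyc X'' hX''
    · exact hD_cyc X hX
  · intro C hC
    have hCgood : GoodIn v H N C := by
      constructor
      · intro e he
        by_cases hv : v ∈ e
        · set u := Sym2.Mem.other hv with hu
          have hspec : s(v, u) = e := Sym2.other_spec hv
          refine Or.inr ⟨u, ?_, hspec.symm⟩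
          rw [hNdef, SimpleGraph.mem_neighborFinset]
          have := hC.1 e he
          rw [← hspec, SimpleGraph.mem_edgeSet] at this
          exact this
        · refine Or.inl ?_
          rw [hHdef, Finset.mem_filter, SimpleGraph.mem_edgeFinset]
          exact ⟨hC.1 e he, hv⟩
      · exact hC.2
    obtain ⟨lD, hlD, hmatch⟩ := hDgen C hCgood
    set C₀ := (lD.foldr symmDiff ∅) ∆ C with hC₀
    have hC₀v : ∀ e ∈ C₀, v ∉ e := by
      intro e he hv
      rw [hC₀, Finset.mem_symmDiff] at he
      rcases he with ⟨h1, h2⟩ | ⟨h1, h2⟩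
      · exact h2 ((hmatch e hv).mp h1)
      · exact h2 ((hmatch e hv).mpr h1)
    have hC₀E : ∀ e ∈ C₀, e ∈ G.edgeSet := by
      intro e he
      rw [hC₀, Finset.mem_symmDiff] at he
      rcases he with ⟨h1, -⟩ | ⟨h1, -⟩
      · obtain ⟨X, hX, heX⟩ := mem_of_mem_foldr h1
        exact (hD_cyc X (hlD.subset hX)).1 e heX
      · exact hC.1 e h1
    have hC₀even : ∀ w, Even ((C₀.filter (fun e => w ∈ e)).card) := by
      intro w
      rw [hC₀]
      exact even_fdeg_symmDiff
        (foldr_symmDiff_even lD w (fun X hX => (hDgood X (hlD.subset hX)).2 w)) (hC.2 w)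
    set C₀' : Finset (Sym2 ↥sc) := Finset.univ.filter (fun e' => ι e' ∈ C₀) with hC₀'
    have himg : C₀'.image ι = C₀ := by
      ext e
      simp only [hC₀', Finset.mem_image, Finset.mem_filter, Finset.mem_univ, true_and]
      constructor
      · rintro ⟨e', he', rfl⟩
        exact he'
      · intro he
        obtain ⟨e', rfl⟩ := hpre e (hC₀v e he)
        exact ⟨e', he, rfl⟩
    have hC₀'cyc : IsF2CycleIn GI.edgeSet C₀' := by
      constructor
      · intro e' he'
        rw [hC₀', Finset.mem_filter] at he'
        exact (hedge e').mpr (hC₀E _ he'.2)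
      · intro w'
        have hw := w'.2
        have := hfilter_img C₀' (w' : V) hw
        have hcard : ((C₀'.image ι).filter (fun e => (w' : V) ∈ e)).card =
            ((C₀'.filter (fun e' => w' ∈ e')).card) := by
          rw [this, Finset.card_image_of_injective _ hinj]
        rw [himg] at hcard
        rw [← hcard]
        exact hC₀even _
    obtain ⟨l'', hl'', hfold''⟩ := hB''gen C₀' hC₀'cyc
    refine ⟨(l''.map (fun X => X.image ι)) ++ lD, (hl''.map _).append hlD, ?_⟩
    rw [foldr_symmDiff_append, himg_fold, ← hfold'', himg, hC₀]
    rw [symmDiff_comm (lD.foldr symmDiff ∅) C, symmDiff_assoc]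
    have : (lD.foldr symmDiff ∅) ∆ (lD.foldr symmDiff ∅) = (∅ : Finset (Sym2 V)) := by
      ext e; simp [Finset.mem_symmDiff]
    rw [this, symmDiff_empty']
  · intro e
    rw [List.countP_append]
    have hD2 := hDcnt e
    have hBb : (B''.map (fun X => X.image ι)).countP (fun X => decide (e ∈ X)) ≤
        bnSet GI.edgeSet := by
      rw [List.countP_map]
      by_cases hv : v ∈ e
      · have h0 : B''.countP ((fun X => decide (e ∈ X)) ∘ fun X => X.image ι) = 0 := by
          rw [List.countP_eq_zero]
          intro X hX
          simp only [Function.comp_apply, decide_eq_true_eq]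
          intro hmem
          obtain ⟨e', he', rfl⟩ := Finset.mem_image.mp hmem
          exact hvι e' hv
        rw [h0]
        exact Nat.zero_le _
      · obtain ⟨e', rfl⟩ := hpre e hv
        have hcc : B''.countP ((fun X => decide (ι e' ∈ X)) ∘ fun X => X.image ι) =
            B''.countP (fun X => decide (e' ∈ X)) := by
          apply List.countP_congr
          intro X hX
          simp only [Function.comp_apply, decide_eq_true_eq]
          constructor
          · intro h
            obtain ⟨e'', he'', heq⟩ := Finset.mem_image.mp h
            rwa [← hinj heq]
          · intro h
            exact Finset.mem_image_of_mem _ h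
        rw [hcc]
        exact hB''cnt e'
    have : bnSet GI.edgeSet = GI.bn := rfl
    omega
end

section
/- In a graph G with an F2-cycle C and a separation (X, Y) such that G[X ∩ Y] is connected, C can be written as C'_X ⊕ C'_Y where C'_X is an F2-cycle contained in G[X] and C'_Y is an F2-cycle contained in G[Y]. -/
variable {V : Type*} [Fintype V] [DecidableEq V]

/-- An F2-cycle of `G`: a set of edges of `G` in which every vertex has even degree. -/
def SimpleGraph.IsF2Cycle (G : SimpleGraph V) (C : Finset (Sym2 V)) : Prop :=
  (∀ e ∈ C, e ∈ G.edgeSet) ∧ ∀ v : V, Even ((C.filter (fun e => v ∈ e)).card)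

open Finset

private lemma card_symmDiff_mod_two {α : Type*} [DecidableEq α] (s t : Finset α) :
    (symmDiff s t).card % 2 = (s.card + t.card) % 2 := by
  have key : (symmDiff s t).card + 2 * (s ∩ t).card = s.card + t.card := by
    rw [symmDiff_def, Finset.sup_eq_union,
      Finset.card_union_of_disjoint (disjoint_sdiff_sdiff)]
    have h1 := Finset.card_sdiff_add_card_inter s t
    have h2 := Finset.card_sdiff_add_card_inter t s
    rw [Finset.inter_comm t s] at h2
    omega
  omega

private lemma filter_symmDiff'_s10 {α : Type*} [DecidableEq α] (s t : Finset α) (p : α → Prop)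
    [DecidablePred p] : (symmDiff s t).filter p = symmDiff (s.filter p) (t.filter p) := by
  ext a; simp [Finset.mem_symmDiff, Finset.mem_filter]; tauto

private lemma deg_symmDiff (A B : Finset (Sym2 V)) (v : V) :
    ((symmDiff A B).filter (fun e => v ∈ e)).card % 2
      = ((A.filter (fun e => v ∈ e)).card + (B.filter (fun e => v ∈ e)).card) % 2 := by
  rw [filter_symmDiff'_s10, card_symmDiff_mod_two]

private lemma walk_countP (G : SimpleGraph V) {a b : V} (w : G.Walk a b) (v : V) :
    (w.edges.countP (fun e => decide (v ∈ e))) % 2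
      = ((if v = a then 1 else 0) + (if v = b then 1 else 0)) % 2 := by
  induction w with
  | nil => rename_i u; by_cases h : v = u <;> simp [h]
  | @cons a c b h p ih =>
    rw [SimpleGraph.Walk.edges_cons, List.countP_cons]
    have hac : a ≠ c := h.ne
    have hm : (decide (v ∈ s(a,c))) = (decide (v = a) || decide (v = c)) := by
      simp [Sym2.mem_iff]
    generalize (if v = b then 1 else 0) = t at ih ⊢
    by_cases h1 : v = a <;> by_cases h2 : v = c
    · exact absurd (h1.symm.trans h2) hac
    · simp [hm, h1, h2, hac, Ne.symm hac] at ih ⊢; omega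
    · simp [hm, h1, h2, hac, Ne.symm hac] at ih ⊢; omega
    · simp [hm, h1, h2, hac, Ne.symm hac] at ih ⊢; omega

private lemma trail_deg (G : SimpleGraph V) {a b : V} (w : G.Walk a b) (hw : w.IsTrail)
    (v : V) :
    ((w.edges.toFinset.filter (fun e => v ∈ e)).card) % 2
      = ((if v = a then 1 else 0) + (if v = b then 1 else 0)) % 2 := by
  have h1 : w.edges.toFinset.filter (fun e => v ∈ e)
      = (w.edges.filter (fun e => decide (v ∈ e))).toFinset := by
    ext e; simp [List.mem_filter]
  rw [h1, List.toFinset_card_of_nodup (hw.edges_nodup.filter _),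
    ← List.countP_eq_length_filter]
  exact walk_countP G w v

private lemma tjoin (G : SimpleGraph V) (S : Set V) (hconn : (G.induce S).Connected)
    (D : Finset V) :
    (∀ v ∈ D, v ∈ S) → Even D.card →
    ∃ F : Finset (Sym2 V), (∀ e ∈ F, e ∈ G.edgeSet) ∧ (∀ e ∈ F, ∀ v ∈ e, v ∈ S) ∧
      ∀ v : V, (F.filter (fun e => v ∈ e)).card % 2 = (if v ∈ D then 1 else 0) := by
  induction D using Finset.strongInductionOn with
  | _ D ih =>
  intro hD hEven
  rcases D.eq_empty_or_nonempty with rfl | ⟨a, ha⟩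
  · exact ⟨∅, by simp, by simp, by simp⟩
  · have hb : ∃ b ∈ D, b ≠ a := by
      by_contra hcon
      push_neg at hcon
      have : D = {a} := by
        apply Finset.eq_singleton_iff_unique_mem.mpr
        exact ⟨ha, fun x hx => hcon x hx⟩
      rw [this] at hEven; simp at hEven
    obtain ⟨b, hb, hba⟩ := hb
    have haS : a ∈ S := hD a ha
    have hbS : b ∈ S := hD b hb
    obtain ⟨w⟩ := hconn.preconnected ⟨a, haS⟩ ⟨b, hbS⟩
    have hpath := (w.toPath).property
    set p := (w.toPath).val with hp
    set q : G.Walk a b := p.map (SimpleGraph.Embedding.induce S).toHom with hqdef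
    have hq : q.IsPath :=
      SimpleGraph.Walk.map_isPath_of_injective
        (SimpleGraph.Embedding.induce (G := G) S).injective hpath
    set P : Finset (Sym2 V) := q.edges.toFinset with hPdef
    have hPedge : ∀ e ∈ P, e ∈ G.edgeSet := by
      intro e he
      exact q.edges_subset_edgeSet (List.mem_toFinset.mp he)
    have hPsup : ∀ e ∈ P, ∀ v ∈ e, v ∈ S := by
      intro e he v hv
      rw [hPdef, List.mem_toFinset] at he
      have hsupp : v ∈ q.support := by
        induction e with
        | _ x y =>
          rcases Sym2.mem_iff.mp hv with rfl | rfl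
          · exact SimpleGraph.Walk.fst_mem_support_of_mem_edges q he
          · exact SimpleGraph.Walk.snd_mem_support_of_mem_edges q he
      have hsupp := (show v ∈ (p.map (SimpleGraph.Embedding.induce S).toHom).support from hsupp)
      rw [SimpleGraph.Walk.support_map, List.mem_map] at hsupp
      obtain ⟨⟨u, hu⟩, _, rfl⟩ := hsupp
      exact hu
    have hPdeg : ∀ v : V, (P.filter (fun e => v ∈ e)).card % 2
        = ((if v = a then 1 else 0) + (if v = b then 1 else 0)) % 2 :=
      fun v => trail_deg G q hq.isTrail v
    -- induction hypothesis
    set D' : Finset V := (D.erase a).erase b with hD'def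
    have hsub : D' ⊂ D :=
      Finset.ssubset_of_subset_of_ssubset (Finset.erase_subset _ _)
        (Finset.erase_ssubset ha)
    have hbmem : b ∈ D.erase a := Finset.mem_erase.mpr ⟨hba, hb⟩
    have hcard : D'.card = D.card - 2 := by
      rw [hD'def, Finset.card_erase_of_mem hbmem, Finset.card_erase_of_mem ha]
      omega
    have hcard2 : 2 ≤ D.card := by
      have := Finset.one_lt_card.mpr ⟨b, hb, a, ha, hba⟩
      omega
    obtain ⟨F', hF1, hF2, hF3⟩ := ih D' hsub
      (fun v hv => hD v (Finset.mem_of_mem_erase (Finset.mem_of_mem_erase hv)))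
      (by rw [Nat.even_iff] at hEven ⊢; omega)
    refine ⟨symmDiff F' P, ?_, ?_, ?_⟩
    · intro e he
      rw [Finset.mem_symmDiff] at he
      rcases he with ⟨he, -⟩ | ⟨he, -⟩
      · exact hF1 e he
      · exact hPedge e he
    · intro e he
      rw [Finset.mem_symmDiff] at he
      rcases he with ⟨he, -⟩ | ⟨he, -⟩
      · exact hF2 e he
      · exact hPsup e he
    · intro v
      have h1 := deg_symmDiff F' P v
      have h2 := hF3 v
      have h3 := hPdeg v
      have hmemD' : v ∈ D' ↔ (v ∈ D ∧ v ≠ a ∧ v ≠ b) := by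
        rw [hD'def]
        simp only [Finset.mem_erase]
        tauto
      have goal_form : ∀ (x y z : ℕ),
          ((if v = a then 1 else 0) = x) → ((if v = b then 1 else 0) = y) →
          ((if v ∈ D' then 1 else 0) = z) →
          ((if v ∈ D then 1 else 0) = (x + y + z) % 2) →
          (Finset.filter (fun e => v ∈ e) (symmDiff F' P)).card % 2
            = (if v ∈ D then 1 else 0) := by
        intro x y z ex ey ez eD
        rw [ex, ey] at h3
        rw [ez] at h2
        rw [eD]
        have hx : x ≤ 1 := by rw [← ex]; split <;> omega
        have hy : y ≤ 1 := by rw [← ey]; split <;> omega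
        have hz : z ≤ 1 := by rw [← ez]; split <;> omega
        omega
      by_cases hva : v = a <;> by_cases hvb : v = b
      · exact absurd (hva.symm.trans hvb) hba.symm
      · have hvD' : v ∉ D' := by rw [hmemD']; tauto
        have hvD : v ∈ D := hva ▸ ha
        exact goal_form 1 0 0 (if_pos hva) (if_neg hvb) (if_neg hvD') (if_pos hvD)
      · have hvD' : v ∉ D' := by rw [hmemD']; tauto
        have hvD : v ∈ D := hvb ▸ hb
        exact goal_form 0 1 0 (if_neg hva) (if_pos hvb) (if_neg hvD') (if_pos hvD)
      · have hiff : (v ∈ D') ↔ (v ∈ D) := by rw [hmemD']; tauto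
        by_cases hvD : v ∈ D
        · exact goal_form 0 0 1 (if_neg hva) (if_neg hvb) (if_pos (hiff.mpr hvD))
            (by rw [if_pos hvD])
        · exact goal_form 0 0 0 (if_neg hva) (if_neg hvb)
            (if_neg (fun h => hvD (hiff.mp h))) (by rw [if_neg hvD])

private lemma all_in_X {G : SimpleGraph V} {X Y : Set V} (hXY : X ∪ Y = Set.univ)
    (hsep : ∀ x ∈ X \ Y, ∀ y ∈ Y \ X, ¬ G.Adj x y) :
    ∀ e : Sym2 V, e ∈ G.edgeSet → ∀ v ∈ e, v ∈ X → v ∉ Y → ∀ w ∈ e, w ∈ X := by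
  intro e
  induction e with
  | _ x y =>
    intro hE v hv hvX hvY w hw
    rw [SimpleGraph.mem_edgeSet] at hE
    by_contra hwX
    have hwY : w ∈ Y :=
      ((Set.mem_union w X Y).mp (hXY ▸ Set.mem_univ w)).resolve_left hwX
    have hvw : v ≠ w := fun h => hwX (h ▸ hvX)
    have hadj : G.Adj v w := by
      rcases Sym2.mem_iff.mp hv with rfl | rfl <;>
        rcases Sym2.mem_iff.mp hw with rfl | rfl <;>
        first | exact absurd rfl hvw | exact hE | exact hE.symm
    exact hsep v ⟨hvX, hvY⟩ w ⟨hwY, hwX⟩ hadj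

/-- given a separation `(X, Y)` of `G` with `G[X ∩ Y]` connected, every
F2-cycle `C` of `G` can be written as `C'_X ⊕ C'_Y` with `C'_X` an F2-cycle contained in
`G[X]` and `C'_Y` an F2-cycle contained in `G[Y]`. -/
theorem f2Cycle_split_along_connected_separator (G : SimpleGraph V) (X Y : Set V)
    (hXY : X ∪ Y = Set.univ) (hsep : ∀ x ∈ X \ Y, ∀ y ∈ Y \ X, ¬ G.Adj x y)
    (hconn : (G.induce (X ∩ Y)).Connected)
    (C : Finset (Sym2 V)) (hC : G.IsF2Cycle C) :
    ∃ CX CY : Finset (Sym2 V),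
      G.IsF2Cycle CX ∧ G.IsF2Cycle CY ∧
      (∀ e ∈ CX, ∀ v ∈ e, v ∈ X) ∧ (∀ e ∈ CY, ∀ v ∈ e, v ∈ Y) ∧
      C = symmDiff CX CY := by
  classical
  obtain ⟨hCe, hCdeg⟩ := hC
  set CX0 := C.filter (fun e => ∀ v ∈ e, v ∈ X) with hCX0
  set CY0 := C \ CX0 with hCY0
  have hCX0sub : CX0 ⊆ C := Finset.filter_subset _ _
  have hCX0X : ∀ e ∈ CX0, ∀ v ∈ e, v ∈ X := fun e he =>
    (Finset.mem_filter.mp he).2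
  have hCY0Y : ∀ e ∈ CY0, ∀ v ∈ e, v ∈ Y := by
    intro e he w hw
    rw [hCY0, Finset.mem_sdiff] at he
    obtain ⟨heC, hnX⟩ := he
    rw [hCX0, Finset.mem_filter] at hnX
    push_neg at hnX
    obtain ⟨u, hu, hunX⟩ := hnX heC
    by_contra hwY
    have hwX : w ∈ X :=
      ((Set.mem_union w X Y).mp (hXY ▸ Set.mem_univ w)).resolve_right hwY
    exact hunX (all_in_X hXY hsep e (hCe e heC) w hw hwX hwY u hu)
  have hdisj : Disjoint CX0 CY0 := Finset.disjoint_sdiff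
  have hunion : CX0 ∪ CY0 = C := by
    rw [hCY0]
    exact Finset.union_sdiff_of_subset hCX0sub
  have hdegsplit : ∀ v : V, (C.filter (fun e => v ∈ e)).card
      = (CX0.filter (fun e => v ∈ e)).card + (CY0.filter (fun e => v ∈ e)).card := by
    intro v
    rw [← hunion, Finset.filter_union,
      Finset.card_union_of_disjoint (Finset.disjoint_filter_filter hdisj)]
  -- the defect set
  set D := Finset.univ.filter
    (fun v => (CX0.filter (fun e => v ∈ e)).card % 2 = 1) with hD
  have hmemD : ∀ v : V, v ∈ D ↔ (CX0.filter (fun e => v ∈ e)).card % 2 = 1 := by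
    intro v; rw [hD, Finset.mem_filter]; simp
  -- D has even cardinality
  have hsum : ∑ v : V, (CX0.filter (fun e => v ∈ e)).card = 2 * CX0.card := by
    calc ∑ v : V, (CX0.filter (fun e => v ∈ e)).card
        = ∑ v : V, ∑ e ∈ CX0, (if v ∈ e then 1 else 0) := by
          simp only [Finset.card_filter]
      _ = ∑ e ∈ CX0, ∑ v : V, (if v ∈ e then 1 else 0) := Finset.sum_comm
      _ = ∑ _e ∈ CX0, 2 := by
          apply Finset.sum_congr rfl
          intro e he
          rw [← Finset.card_filter]
          have hE := hCe e (hCX0sub he)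
          induction e with
          | _ x y =>
            rw [SimpleGraph.mem_edgeSet] at hE
            have hxy : x ≠ y := hE.ne
            have : Finset.univ.filter (fun v => v ∈ s(x, y)) = {x, y} := by
              ext z; simp [Sym2.mem_iff]
            rw [this, Finset.card_pair hxy]
      _ = 2 * CX0.card := by
          rw [Finset.sum_const, smul_eq_mul, mul_comm]
  have hDeven : Even D.card := by
    have hmod : (∑ v : V, (CX0.filter (fun e => v ∈ e)).card) % 2 = D.card % 2 := by
      rw [Finset.sum_nat_mod]
      congr 1
      rw [← Finset.sum_filter_add_sum_filter_not Finset.univ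
        (fun v => (CX0.filter (fun e => v ∈ e)).card % 2 = 1)]
      rw [← hD]
      have h1 : ∑ v ∈ D, (CX0.filter (fun e => v ∈ e)).card % 2 = D.card := by
        rw [Finset.card_eq_sum_ones]
        apply Finset.sum_congr rfl
        intro v hv
        exact (hmemD v).mp hv
      have h2 : ∑ v ∈ Finset.univ.filter
          (fun v => ¬ (CX0.filter (fun e => v ∈ e)).card % 2 = 1),
          (CX0.filter (fun e => v ∈ e)).card % 2 = 0 := by
        apply Finset.sum_eq_zero
        intro v hv
        have := (Finset.mem_filter.mp hv).2
        omega
      rw [h1, h2, add_zero]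
    rw [Nat.even_iff]
    omega
  -- D is contained in X ∩ Y
  have hDXY : ∀ v ∈ D, v ∈ X ∩ Y := by
    intro v hv
    have hodd := (hmemD v).mp hv
    have hpos : 0 < (CX0.filter (fun e => v ∈ e)).card := by omega
    obtain ⟨e, he⟩ := Finset.card_pos.mp hpos
    rw [Finset.mem_filter] at he
    have hvX : v ∈ X := hCX0X e he.1 v he.2
    have hvY : v ∈ Y := by
      by_contra hvY
      have hfeq : C.filter (fun e => v ∈ e) = CX0.filter (fun e => v ∈ e) := by
        apply Finset.Subset.antisymm
        · intro f hf
          rw [Finset.mem_filter] at hf ⊢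
          refine ⟨Finset.mem_filter.mpr ⟨hf.1, ?_⟩, hf.2⟩
          exact all_in_X hXY hsep f (hCe f hf.1) v hf.2 hvX hvY
        · exact Finset.filter_subset_filter _ hCX0sub
      have := hCdeg v
      rw [hfeq, Nat.even_iff] at this
      omega
    exact ⟨hvX, hvY⟩
  -- get the T-join
  obtain ⟨F, hF1, hF2, hF3⟩ := tjoin G (X ∩ Y) hconn D
    (fun v hv => hDXY v hv) hDeven
  refine ⟨symmDiff CX0 F, symmDiff CY0 F, ⟨?_, ?_⟩, ⟨?_, ?_⟩, ?_, ?_, ?_⟩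
  · intro e he
    rw [Finset.mem_symmDiff] at he
    rcases he with ⟨he, -⟩ | ⟨he, -⟩
    · exact hCe e (hCX0sub he)
    · exact hF1 e he
  · intro v
    have h1 := deg_symmDiff CX0 F v
    have h2 := hF3 v
    rw [Nat.even_iff]
    by_cases hvD : v ∈ D
    · have h3 := (hmemD v).mp hvD
      rw [if_pos hvD] at h2
      omega
    · have h3 : ¬ (CX0.filter (fun e => v ∈ e)).card % 2 = 1 :=
        fun h => hvD ((hmemD v).mpr h)
      rw [if_neg hvD] at h2
      omega
  · intro e he
    rw [Finset.mem_symmDiff] at he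
    rcases he with ⟨he, -⟩ | ⟨he, -⟩
    · exact hCe e ((Finset.sdiff_subset) he)
    · exact hF1 e he
  · intro v
    have h1 := deg_symmDiff CY0 F v
    have h2 := hF3 v
    have h3 := hdegsplit v
    have h4 := hCdeg v
    rw [Nat.even_iff] at h4 ⊢
    by_cases hvD : v ∈ D
    · have h5 := (hmemD v).mp hvD
      rw [if_pos hvD] at h2
      omega
    · have h5 : ¬ (CX0.filter (fun e => v ∈ e)).card % 2 = 1 :=
        fun h => hvD ((hmemD v).mpr h)
      rw [if_neg hvD] at h2
      omega
  · intro e he v hv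
    rw [Finset.mem_symmDiff] at he
    rcases he with ⟨he, -⟩ | ⟨he, -⟩
    · exact hCX0X e he v hv
    · exact (hF2 e he v hv).1
  · intro e he v hv
    rw [Finset.mem_symmDiff] at he
    rcases he with ⟨he, -⟩ | ⟨he, -⟩
    · exact hCY0Y e he v hv
    · exact (hF2 e he v hv).2
  · rw [symmDiff_assoc, symmDiff_comm CY0 F, symmDiff_symmDiff_cancel_left,
      hdisj.symmDiff_eq_sup, Finset.sup_eq_union, hunion]
end
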